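/- Let r > l > 0, h > 0 and define D(x,y) = √(y² + (x+l)²) if x < −l, D(x,y) = |y| if −l ≤ x ≤ l, and D(x,y) = √(y² + (x−l)²) if x > l. For (X,Y) uniform on the disk of radius r, and 0 ≤ x ≤ r − l, P(D(X,Y) ≤ x) = (4xl + πx²)/(π r²). -/
import Mathlib


open Real MeasureTheory

/-- Partial-coverage CDF in the stadium regime: for (X,Y) uniform on the disk of radius r,
D the horizontal distance to the segment [−l,l]×{0}, and 0 ≤ x ≤ r − l,
P(D ≤ x) = (4xl + πx²)/(π r²). -/
theorem stmt6 (r l x : ℝ) (hl : 0 < l) (hlr : l < r) (hx : 0 ≤ x) (hxr : x ≤ r - l)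
    (D : ℝ × ℝ → ℝ)
    (hD : ∀ p : ℝ × ℝ, D p =
      if p.1 < -l then Real.sqrt (p.2 ^ 2 + (p.1 + l) ^ 2)
      else if p.1 ≤ l then |p.2|
      else Real.sqrt (p.2 ^ 2 + (p.1 - l) ^ 2)) :
    (volume {p : ℝ × ℝ | p.1 ^ 2 + p.2 ^ 2 ≤ r ^ 2 ∧ D p ≤ x}).toReal / (π * r ^ 2)
      = (4 * x * l + π * x ^ 2) / (π * r ^ 2) := by
  -- q t = squared distance from t to [-l, l]
  set q : ℝ → ℝ := fun t => (max (|t| - l) 0) ^ 2 with hq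
  have hq_nonneg : ∀ t, 0 ≤ q t := fun t => sq_nonneg _
  -- key characterization: D p ≤ x ↔ p.2 ^ 2 + q p.1 ≤ x ^ 2
  have hDx : ∀ p : ℝ × ℝ, D p ≤ x ↔ p.2 ^ 2 + q p.1 ≤ x ^ 2 := by
    intro p
    rw [hD p]
    rcases lt_or_ge p.1 (-l) with h1 | h1
    · rw [if_pos h1, Real.sqrt_le_left hx]
      have : q p.1 = (p.1 + l) ^ 2 := by
        simp only [hq]
        rw [abs_of_neg (by linarith : p.1 < 0), max_eq_left (by linarith)]
        ring
      rw [this]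
    · rw [if_neg (not_lt.2 h1)]
      rcases le_or_gt p.1 l with h2 | h2
      · rw [if_pos h2]
        have : q p.1 = 0 := by
          simp only [hq]
          rw [max_eq_right (by rw [sub_nonpos]; exact abs_le.2 ⟨h1, h2⟩), zero_pow two_ne_zero]
        rw [this, add_zero]
        constructor
        · intro h; nlinarith [abs_nonneg p.2, sq_abs p.2]
        · intro h; nlinarith [abs_nonneg p.2, sq_abs p.2]
      · rw [if_neg (not_le.2 h2), Real.sqrt_le_left hx]
        have : q p.1 = (p.1 - l) ^ 2 := by
          simp only [hq]
          rw [abs_of_pos (by linarith : 0 < p.1), max_eq_left (by linarith)]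
        rw [this]
  -- D p ≤ x implies p is in the disk
  have hdisk : ∀ p : ℝ × ℝ, p.2 ^ 2 + q p.1 ≤ x ^ 2 → p.1 ^ 2 + p.2 ^ 2 ≤ r ^ 2 := by
    intro p h
    have hm := le_max_left (|p.1| - l) 0
    have hm0 := le_max_right (|p.1| - l) 0
    have : (max (|p.1| - l) 0) ^ 2 + p.2 ^ 2 ≤ x ^ 2 := by simp only [hq] at h; linarith
    have habs : |p.1| ≤ l + max (|p.1| - l) 0 := by linarith
    have h1 : max (|p.1| - l) 0 ≤ x := by nlinarith [sq_nonneg p.2]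
    nlinarith [sq_abs p.1, abs_nonneg p.1]
  have hset : {p : ℝ × ℝ | p.1 ^ 2 + p.2 ^ 2 ≤ r ^ 2 ∧ D p ≤ x}
      = {p : ℝ × ℝ | p.2 ^ 2 + q p.1 ≤ x ^ 2} := by
    ext p
    simp only [Set.mem_setOf_eq, hDx p]
    exact ⟨fun h => h.2, fun h => ⟨hdisk p h, h⟩⟩
  rw [hset]
  -- measurability
  have hqm : Measurable q := by fun_prop
  have hmeas : MeasurableSet {p : ℝ × ℝ | p.2 ^ 2 + q p.1 ≤ x ^ 2} := by
    apply measurableSet_le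
    · exact (measurable_snd.pow_const 2).add (hqm.comp measurable_fst)
    · exact measurable_const
  -- slice computation
  set g : ℝ → ℝ := fun t => 2 * Real.sqrt (x ^ 2 - q t) with hg
  have hslice : ∀ t : ℝ, volume (Prod.mk t ⁻¹' {p : ℝ × ℝ | p.2 ^ 2 + q p.1 ≤ x ^ 2})
      = ENNReal.ofReal (g t) := by
    intro t
    rcases le_or_gt (q t) (x ^ 2) with hc | hc
    · have : Prod.mk t ⁻¹' {p : ℝ × ℝ | p.2 ^ 2 + q p.1 ≤ x ^ 2}
          = Set.Icc (-Real.sqrt (x ^ 2 - q t)) (Real.sqrt (x ^ 2 - q t)) := by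
        ext y
        simp only [Set.mem_preimage, Set.mem_setOf_eq, Set.mem_Icc, ← abs_le]
        rw [Real.le_sqrt (abs_nonneg y) (by linarith : (0:ℝ) ≤ x ^ 2 - q t), sq_abs]
        constructor <;> intro h <;> linarith
      rw [this, Real.volume_Icc]
      congr 1
      simp only [hg]; ring
    · have h0 : Prod.mk t ⁻¹' {p : ℝ × ℝ | p.2 ^ 2 + q p.1 ≤ x ^ 2} = ∅ := by
        ext y
        simp only [Set.mem_preimage, Set.mem_setOf_eq, Set.mem_empty_iff_false, iff_false]
        intro h; nlinarith [sq_nonneg y]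
      rw [h0, measure_empty]
      have : Real.sqrt (x ^ 2 - q t) = 0 := Real.sqrt_eq_zero_of_nonpos (by linarith)
      simp [hg, this]
  -- g is continuous with compact support, nonneg
  have hgc : Continuous g := by fun_prop
  have hgsupp : Function.support g ⊆ Set.Ioc (-(l + x)) (l + x) := by
    intro t ht
    simp only [Function.mem_support, hg] at ht
    by_contra hmem
    simp only [Set.mem_Ioc, not_and_or, not_lt, not_le] at hmem
    have habs : l + x ≤ |t| := by
      rcases hmem with h | h
      · rw [abs_of_neg (by linarith : t < 0)]; linarith
      · rw [abs_of_pos (by linarith : 0 < t)]; linarith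
    have hqt : x ^ 2 - q t ≤ 0 := by
      have h1 : x ≤ |t| - l := by linarith
      have h2 : max (|t| - l) 0 = |t| - l := max_eq_left (by linarith)
      simp only [hq, h2]
      nlinarith
    exact ht (by rw [Real.sqrt_eq_zero_of_nonpos hqt, mul_zero])
  have hgsupp' : Function.support g ⊆ Set.Icc (-(l + x)) (l + x) :=
    hgsupp.trans Set.Ioc_subset_Icc_self
  have hgint : Integrable g := by
    apply hgc.integrable_of_hasCompactSupport
    exact HasCompactSupport.intro isCompact_Icc (fun t ht => by
      by_contra h; exact ht (hgsupp' h))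
  have hgnn : ∀ t, 0 ≤ g t := fun t => by
    simp only [hg]; positivity
  -- volume via Fubini
  have hvol : volume {p : ℝ × ℝ | p.2 ^ 2 + q p.1 ≤ x ^ 2} = ENNReal.ofReal (∫ t, g t) := by
    rw [MeasureTheory.ofReal_integral_eq_lintegral_ofReal hgint
      (Filter.Eventually.of_forall hgnn)]
    rw [Measure.volume_eq_prod, Measure.prod_apply hmeas]
    exact lintegral_congr fun t => hslice t
  -- compute the integral
  have hiint : ∀ a b : ℝ, IntervalIntegrable g volume a b := fun a b =>
    hgint.intervalIntegrable
  have hint : ∫ t, g t = 4 * x * l + π * x ^ 2 := by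
    rw [← intervalIntegral.integral_eq_integral_of_support_subset hgsupp]
    rw [← intervalIntegral.integral_add_adjacent_intervals (b := -l) (hiint _ _) (hiint _ _),
        ← intervalIntegral.integral_add_adjacent_intervals (a := -l) (b := l) (hiint _ _) (hiint _ _)]
    have hmid : ∫ t in (-l)..l, g t = 4 * x * l := by
      have : ∀ t ∈ Set.uIcc (-l) l, g t = 2 * x := by
        intro t ht
        rw [Set.uIcc_of_le (by linarith), Set.mem_Icc] at ht
        have : q t = 0 := by
          simp only [hq]
          rw [max_eq_right (by rw [sub_nonpos]; exact abs_le.2 ⟨ht.1, ht.2⟩), zero_pow two_ne_zero]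
        simp only [hg, this, sub_zero, Real.sqrt_sq hx]
      rw [intervalIntegral.integral_congr this, intervalIntegral.integral_const]
      simp; ring
    have hleft : ∫ t in (-(l + x))..(-l), g t = ∫ s in (-x)..(0:ℝ), 2 * Real.sqrt (x ^ 2 - s ^ 2) := by
      have : ∀ t ∈ Set.uIcc (-(l+x)) (-l), g t = 2 * Real.sqrt (x ^ 2 - (t + l) ^ 2) := by
        intro t ht
        rw [Set.uIcc_of_le (by linarith), Set.mem_Icc] at ht
        have : q t = (t + l) ^ 2 := by
          simp only [hq]
          rw [abs_of_nonpos (by linarith : t ≤ 0), max_eq_left (by linarith)]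
          ring
        simp only [hg, this]
      rw [intervalIntegral.integral_congr this]
      have := intervalIntegral.integral_comp_add_right (a := -(l+x)) (b := -l)
        (fun s => 2 * Real.sqrt (x ^ 2 - s ^ 2)) l
      rw [this]
      norm_num
    have hright : ∫ t in l..(l + x), g t = ∫ s in (0:ℝ)..x, 2 * Real.sqrt (x ^ 2 - s ^ 2) := by
      have : ∀ t ∈ Set.uIcc l (l+x), g t = 2 * Real.sqrt (x ^ 2 - (t - l) ^ 2) := by
        intro t ht
        rw [Set.uIcc_of_le (by linarith), Set.mem_Icc] at ht
        have : q t = (t - l) ^ 2 := by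
          simp only [hq]
          rw [abs_of_pos (by linarith : 0 < t), max_eq_left (by linarith)]
        simp only [hg, this]
      rw [intervalIntegral.integral_congr this]
      have := intervalIntegral.integral_comp_sub_right (a := l) (b := l + x)
        (fun s => 2 * Real.sqrt (x ^ 2 - s ^ 2)) l
      rw [this]
      norm_num
    have hhalf : (∫ s in (-x)..(0:ℝ), 2 * Real.sqrt (x ^ 2 - s ^ 2))
        + (∫ s in (0:ℝ)..x, 2 * Real.sqrt (x ^ 2 - s ^ 2))
        = ∫ s in (-x)..x, 2 * Real.sqrt (x ^ 2 - s ^ 2) := by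
      apply intervalIntegral.integral_add_adjacent_intervals
      · apply Continuous.intervalIntegrable; fun_prop
      · apply Continuous.intervalIntegrable; fun_prop
    have hsemi : ∫ s in (-x)..x, 2 * Real.sqrt (x ^ 2 - s ^ 2) = π * x ^ 2 := by
      rcases eq_or_lt_of_le hx with h0 | h0
      · rw [← h0]; norm_num
      · have h2 : (x:ℝ) ≠ 0 := ne_of_gt h0
        have hcm := intervalIntegral.integral_comp_mul_left (a := (-1:ℝ)) (b := 1)
          (fun s => 2 * Real.sqrt (x ^ 2 - s ^ 2)) h2
        have heq : ∀ u : ℝ, 2 * Real.sqrt (x ^ 2 - (x * u) ^ 2) = x * (2 * Real.sqrt (1 - u ^ 2)) := by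
          intro u
          have : x ^ 2 - (x * u) ^ 2 = x ^ 2 * (1 - u ^ 2) := by ring
          rw [this, Real.sqrt_mul (sq_nonneg x), Real.sqrt_sq hx]
          ring
        simp only [heq, mul_neg_one, mul_one] at hcm
        rw [intervalIntegral.integral_const_mul, intervalIntegral.integral_const_mul,
          integral_sqrt_one_sub_sq, smul_eq_mul] at hcm
        have hxI : (∫ s in (-x)..x, 2 * Real.sqrt (x ^ 2 - s ^ 2))
            = x * (x⁻¹ * ∫ s in (-x)..x, 2 * Real.sqrt (x ^ 2 - s ^ 2)) := by
          rw [← mul_assoc, mul_inv_cancel₀ h2, one_mul]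
        rw [hxI, ← hcm]
        ring
    rw [hmid, hleft, hright]
    linarith [hhalf, hsemi]
  rw [hvol, hint, ENNReal.toReal_ofReal]
  have := Real.pi_pos
  nlinarith [sq_nonneg x, mul_nonneg hx hl.le]
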